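/- Let n ≥ 1, let M be a symmetric n×n matrix with rational entries, defining the quadratic form q(x) = xᵀMx and the polar pairing B(x, y) = xᵀMy, and let a ∈ ℚ. Suppose v₀ ∈ ℚⁿ satisfies q(v₀) = a. Let w ∈ ℝⁿ satisfy q(w) = a (the form extended to ℝⁿ) and B(v₀, w) ≠ a. Then for every ε > 0 there exists v ∈ ℚⁿ with q(v) = a and ‖w − v‖ < ε, where ‖·‖ is the Euclidean norm on ℝⁿ. -/

import Mathlib

open Matrix

private lemma symm_dot {K : Type*} [Field K] {n : ℕ} {M : Matrix (Fin n) (Fin n) K}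
    (hM : M.IsSymm) (x y : Fin n → K) :
    x ⬝ᵥ M.mulVec y = y ⬝ᵥ M.mulVec x := by
  calc x ⬝ᵥ M.mulVec y = (x ᵥ* M) ⬝ᵥ y := Matrix.dotProduct_mulVec _ _ _
    _ = y ⬝ᵥ (x ᵥ* M) := dotProduct_comm _ _
    _ = y ⬝ᵥ (Mᵀ.mulVec x) := by rw [Matrix.mulVec_transpose]
    _ = y ⬝ᵥ M.mulVec x := by rw [hM.eq]

private lemma quad_expand {K : Type*} [Field K] {n : ℕ} {M : Matrix (Fin n) (Fin n) K}
    (hM : M.IsSymm) (u d : Fin n → K) (t : K) :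
    (u + t • d) ⬝ᵥ M.mulVec (u + t • d) =
      u ⬝ᵥ M.mulVec u + t * (2 * (u ⬝ᵥ M.mulVec d) + t * (d ⬝ᵥ M.mulVec d)) := by
  have h := symm_dot hM d u
  simp only [Matrix.mulVec_add, Matrix.mulVec_smul, dotProduct_add, add_dotProduct,
    dotProduct_smul, smul_dotProduct, smul_eq_mul, h]
  ring

private lemma cast_dot {n : ℕ} (M : Matrix (Fin n) (Fin n) ℚ) (x y : Fin n → ℚ) :
    ((x ⬝ᵥ M.mulVec y : ℚ) : ℝ) =
      (fun i => (x i : ℝ)) ⬝ᵥ (M.map (fun q : ℚ => (q : ℝ))).mulVec (fun i => (y i : ℝ)) := by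
  simp only [dotProduct, Matrix.mulVec, Matrix.map_apply]
  push_cast
  rfl

/-- Density of rational points on a rational quadric near a real point whose polar
pairing with a given rational point `v₀` differs from `a`
(Claim 6.14 of the paper). -/
theorem stmt_6 (n : ℕ) (hn : 1 ≤ n) (M : Matrix (Fin n) (Fin n) ℚ)
    (hM : M.IsSymm) (a : ℚ) (v₀ : Fin n → ℚ)
    (hv₀ : v₀ ⬝ᵥ M.mulVec v₀ = a)
    (w : Fin n → ℝ)
    (hw : w ⬝ᵥ (M.map (fun x : ℚ => (x : ℝ))).mulVec w = (a : ℝ))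
    (hB : (fun i => (v₀ i : ℝ)) ⬝ᵥ (M.map (fun x : ℚ => (x : ℝ))).mulVec w ≠ (a : ℝ)) :
    ∀ ε : ℝ, 0 < ε → ∃ v : Fin n → ℚ,
      v ⬝ᵥ M.mulVec v = a ∧
      Real.sqrt (∑ i, (w i - (v i : ℝ)) ^ 2) < ε := by
  intro ε hε
  set Mr : Matrix (Fin n) (Fin n) ℝ := M.map (fun x : ℚ => (x : ℝ)) with hMr
  have hMrSymm : Mr.IsSymm := hM.map _
  set u : Fin n → ℝ := fun i => (v₀ i : ℝ) with hu
  -- real bilinear/quadratic forms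
  set B : (Fin n → ℝ) → ℝ := fun d => u ⬝ᵥ Mr.mulVec d with hBdef
  set Q : (Fin n → ℝ) → ℝ := fun d => d ⬝ᵥ Mr.mulVec d with hQdef
  set d₀ : Fin n → ℝ := w - u with hd₀
  have hQu : Q u = (a : ℝ) := by
    have := cast_dot M v₀ v₀
    rw [hv₀] at this
    simpa [Q, Mr, u] using this.symm
  have hBw : B w ≠ (a : ℝ) := hB
  -- Q d₀ = 2a - 2 B w ≠ 0
  have hQd₀ : Q d₀ = 2 * (a : ℝ) - 2 * B w := by
    have hsymm := symm_dot hMrSymm u w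
    simp only [Q, d₀, B, sub_eq_add_neg]
    simp only [Matrix.mulVec_add, Matrix.mulVec_neg, dotProduct_add, add_dotProduct,
      dotProduct_neg, neg_dotProduct, hsymm]
    have hQu' : u ⬝ᵥ Mr.mulVec u = (a : ℝ) := hQu
    have hww : w ⬝ᵥ Mr.mulVec w = (a : ℝ) := hw
    rw [hQu', hww]
    ring
  have hQd₀ne : Q d₀ ≠ 0 := by
    rw [hQd₀]
    intro h
    apply hBw
    linarith
  -- the map g sending a direction d to the second intersection point
  set g : (Fin n → ℝ) → (Fin n → ℝ) := fun d => u + (-(2 * B d) / Q d) • d with hg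
  have hcontQ : Continuous Q := by
    simp only [Q, dotProduct, Matrix.mulVec]
    fun_prop
  have hcontB : Continuous B := by
    simp only [B, dotProduct, Matrix.mulVec]
    fun_prop
  have hgd₀ : g d₀ = w := by
    have ht : -(2 * B d₀) / Q d₀ = 1 := by
      have : B d₀ = B w - (a : ℝ) := by
        simp only [B, d₀, sub_eq_add_neg, Matrix.mulVec_add, Matrix.mulVec_neg,
          dotProduct_add, dotProduct_neg]
        rw [show u ⬝ᵥ Mr.mulVec u = (a : ℝ) from hQu]
      have hne : 2 * (a : ℝ) - 2 * B w ≠ 0 := by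
        intro h; exact hBw (by linarith)
      rw [this, hQd₀, div_eq_one_iff_eq hne]
      ring
    simp [g, ht, d₀]
  have hcontg : ContinuousAt g d₀ := by
    apply ContinuousAt.add continuousAt_const
    refine ContinuousAt.smul (f := fun d => -(2 * B d) / Q d) (g := fun d => d) ?_ ?_
    · exact ((hcontB.continuousAt.const_mul (2 : ℝ)).neg).div hcontQ.continuousAt hQd₀ne
    · exact continuousAt_id
  -- choose ε'
  set ε' : ℝ := ε / (n + 1) with hε'
  have hε'pos : 0 < ε' := by positivity
  have := Metric.continuousAt_iff.mp hcontg ε' hε'pos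
  obtain ⟨δ, hδpos, hδ⟩ := this
  -- pick a rational vector d near d₀
  have hchoice : ∀ i : Fin n, ∃ q : ℚ, |d₀ i - (q : ℝ)| < δ := fun i =>
    exists_rat_near (d₀ i) hδpos
  choose dq hdq using hchoice
  set dr : Fin n → ℝ := fun i => (dq i : ℝ) with hdr
  have hdist : dist dr d₀ < δ := by
    rw [dist_pi_lt_iff hδpos]
    intro i
    rw [Real.dist_eq]
    simpa [abs_sub_comm] using hdq i
  have hnear := hδ hdist
  rw [hgd₀] at hnear
  -- rational point
  set t : ℚ := -(2 * (v₀ ⬝ᵥ M.mulVec dq)) / (dq ⬝ᵥ M.mulVec dq) with htdef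
  refine ⟨v₀ + t • dq, ?_, ?_⟩
  · rw [quad_expand hM]
    by_cases hz : dq ⬝ᵥ M.mulVec dq = 0
    · simp [t, hz, hv₀]
    · have : t * (dq ⬝ᵥ M.mulVec dq) = -(2 * (v₀ ⬝ᵥ M.mulVec dq)) := by
        rw [htdef]; field_simp
      rw [hv₀]
      rw [show 2 * (v₀ ⬝ᵥ M.mulVec dq) + t * (dq ⬝ᵥ M.mulVec dq) = 0 by rw [this]; ring]
      ring
  · -- identify the real coordinates of v with g dr
    have hBcast : B dr = ((v₀ ⬝ᵥ M.mulVec dq : ℚ) : ℝ) := by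
      rw [cast_dot]
    have hQcast : Q dr = ((dq ⬝ᵥ M.mulVec dq : ℚ) : ℝ) := by
      rw [cast_dot]
    have htcast : ((t : ℚ) : ℝ) = -(2 * B dr) / Q dr := by
      rw [htdef, hBcast, hQcast]; push_cast; ring_nf
    have hvcoord : ∀ i, ((v₀ + t • dq) i : ℝ) = g dr i := by
      intro i
      simp only [g, Pi.add_apply, Pi.smul_apply, smul_eq_mul, u]
      push_cast
      rw [← htcast]
    -- bound the sum of squares
    have hsum : ∑ i, (w i - ((v₀ + t • dq) i : ℝ)) ^ 2 ≤ (n : ℝ) * ε' ^ 2 := by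
      have hbound : ∀ i, (w i - ((v₀ + t • dq) i : ℝ)) ^ 2 ≤ ε' ^ 2 := by
        intro i
        rw [hvcoord i]
        have h1 : dist (g dr i) (w i) ≤ dist (g dr) w := dist_le_pi_dist _ _ i
        have h2 : dist (g dr i) (w i) < ε' := lt_of_le_of_lt h1 hnear
        rw [Real.dist_eq] at h2
        have : |w i - g dr i| < ε' := by rwa [abs_sub_comm] at h2
        calc (w i - g dr i) ^ 2 = |w i - g dr i| ^ 2 := (sq_abs _).symm
          _ ≤ ε' ^ 2 := by nlinarith [abs_nonneg (w i - g dr i)]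
      calc ∑ i, (w i - ((v₀ + t • dq) i : ℝ)) ^ 2 ≤ ∑ _i : Fin n, ε' ^ 2 :=
            Finset.sum_le_sum fun i _ => hbound i
        _ = (n : ℝ) * ε' ^ 2 := by simp [mul_comm]
    have hfin : (n : ℝ) * ε' ^ 2 < ε ^ 2 := by
      have hn0 : (0 : ℝ) ≤ (n : ℝ) := Nat.cast_nonneg n
      have hn1 : (0 : ℝ) < (n : ℝ) + 1 := by positivity
      calc (n : ℝ) * ε' ^ 2 = ε ^ 2 * ((n : ℝ) / ((n : ℝ) + 1) ^ 2) := by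
            rw [hε']; field_simp
        _ < ε ^ 2 * 1 := by
            apply mul_lt_mul_of_pos_left _ (by positivity)
            rw [div_lt_one (by positivity)]
            nlinarith
        _ = ε ^ 2 := mul_one _
    have : Real.sqrt (∑ i, (w i - ((v₀ + t • dq) i : ℝ)) ^ 2) < ε := by
      have h1 : ∑ i, (w i - ((v₀ + t • dq) i : ℝ)) ^ 2 < ε ^ 2 :=
        lt_of_le_of_lt hsum hfin
      have h2 := Real.sqrt_lt_sqrt (by positivity) h1
      rwa [Real.sqrt_sq hε.le] at h2
    exact this
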